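/- Let A be a unital C*-algebra and a ∈ A a positive invertible element. Then for every real α > 0 and every hermitian continuous linear functional f on A, the inequalities r_{a^α}(f) ≤ ‖a^α‖ · ‖f‖ and ‖f‖ ≤ ‖a^{−α}‖ · r_{a^α}(f) hold; in particular r_{a^α} is equivalent to the dual norm ‖·‖ on hermitian functionals. -/

import Mathlib

open scoped ComplexOrder NNReal

variable {A : Type*} [CStarAlgebra A] [PartialOrder A] [StarOrderedRing A]

/-- A continuous linear functional on a C*-algebra is positive if it is nonnegative on
positive elements (using the complex order). -/
def IsPosFunctional {A : Type*} [CStarAlgebra A] [PartialOrder A] [StarOrderedRing A]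
    (f : A →L[ℂ] ℂ) : Prop :=
  ∀ x : A, 0 ≤ x → 0 ≤ f x

/-- A continuous linear functional is hermitian if `f (star x) = conj (f x)` for all `x`. -/
def IsHermitianFunctional {A : Type*} [CStarAlgebra A] (f : A →L[ℂ] ℂ) : Prop :=
  ∀ x : A, f (star x) = starRingEnd ℂ (f x)

/-- The seminorm `r_a` associated with a positive element `a`:
`r_a(f) = inf { f₁(a) + f₂(a) | f = f₁ - f₂, f₁, f₂ positive }`. -/
noncomputable def rSeminorm {A : Type*} [CStarAlgebra A] [PartialOrder A] [StarOrderedRing A]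
    (a : A) (f : A →L[ℂ] ℂ) : ℝ :=
  sInf { r : ℝ | ∃ f₁ f₂ : A →L[ℂ] ℂ, IsPosFunctional f₁ ∧ IsPosFunctional f₂ ∧
    f = f₁ - f₂ ∧ (r : ℂ) = f₁ a + f₂ a }

section AuxNorm

/-- A selfadjoint element squeezed between `-M•1` and `M•1` has norm at most `M`. -/
lemma auxNormLe {z : A} (hz : IsSelfAdjoint z) {M : ℝ} (hM : 0 ≤ M)
    (h1 : -(algebraMap ℝ A M) ≤ z) (h2 : z ≤ algebraMap ℝ A M) : ‖z‖ ≤ M := by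
  have hs1 : ∀ x ∈ spectrum ℝ z, x ≤ M := (le_algebraMap_iff_spectrum_le (a := z) hz).mp h2
  have hs2 : ∀ x ∈ spectrum ℝ z, -M ≤ x := by
    refine (algebraMap_le_iff_le_spectrum (a := z) hz).mp ?_
    rwa [map_neg]
  rw [← cfc_id ℝ z hz]
  exact norm_cfc_le hM fun x hx => by
    rw [id_eq, Real.norm_eq_abs, abs_le]; exact ⟨hs2 x hx, hs1 x hx⟩

lemma auxNormMono {u v : A} (hu : u ≤ 0) (hv : v ≤ 0) : ‖u‖ ≤ ‖u + v‖ := by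
  have h1 : (0 : A) ≤ -u := neg_nonneg.mpr hu
  have h2 : -u ≤ -(u + v) := by
    rw [neg_add]
    simpa using neg_nonneg.mpr hv
  calc ‖u‖ = ‖-u‖ := (norm_neg u).symm
    _ ≤ ‖-(u + v)‖ := CStarAlgebra.norm_le_norm_of_nonneg_of_le h1 h2
    _ = ‖u + v‖ := norm_neg _

end AuxNorm

namespace IsPosFunctional

open scoped ComplexStarModule

variable {f : A →L[ℂ] ℂ}

lemma re_nonneg (hf : IsPosFunctional f) {x : A} (hx : 0 ≤ x) : 0 ≤ (f x).re :=
  (Complex.le_def.mp (hf x hx)).1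

lemma im_eq_zero (hf : IsPosFunctional f) {x : A} (hx : 0 ≤ x) : (f x).im = 0 :=
  ((Complex.le_def.mp (hf x hx)).2).symm

lemma apply_eq_re (hf : IsPosFunctional f) {x : A} (hx : IsSelfAdjoint x) :
    f x = ((f x).re : ℂ) := by
  have hd := CFC.posPart_sub_negPart x hx
  rw [← hd, map_sub, Complex.ext_iff]
  refine ⟨by simp, ?_⟩
  simp only [Complex.sub_im, Complex.ofReal_im]
  rw [hf.im_eq_zero (CFC.posPart_nonneg x), hf.im_eq_zero (CFC.negPart_nonneg x)]
  ring

lemma re_mono (hf : IsPosFunctional f) {x y : A} (h : x ≤ y) : (f x).re ≤ (f y).re := by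
  have h0 := hf.re_nonneg (sub_nonneg.mpr h)
  rw [map_sub, Complex.sub_re] at h0
  linarith

lemma hermitian (hf : IsPosFunctional f) : IsHermitianFunctional f := by
  intro x
  have hd := realPart_add_I_smul_imaginaryPart x
  have hsd : star x = (ℜ x : A) - Complex.I • (ℑ x : A) := by
    conv_lhs => rw [← hd]
    rw [star_add, star_smul, Complex.star_def, Complex.conj_I,
      (ℜ x).property.star_eq, (ℑ x).property.star_eq, neg_smul, ← sub_eq_add_neg]
  have fh := hf.apply_eq_re (ℜ x).property
  have fk := hf.apply_eq_re (ℑ x).property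
  rw [hsd]
  conv_rhs => rw [← hd]
  rw [map_sub, map_smul, map_add, map_smul, fh, fk]
  simp [Complex.ext_iff]

lemma one_nonneg' : (0:A) ≤ 1 := by simpa using star_mul_self_nonneg (1 : A)

lemma norm_le_re_one (hf : IsPosFunctional f) : ‖f‖ ≤ (f 1).re := by
  have herm := hf.hermitian
  have hone : (0:A) ≤ 1 := one_nonneg'
  letI core : PreInnerProductSpace.Core ℂ A :=
    { inner := fun x y => f (star x * y)
      conj_inner_symm := fun x y => by
        show starRingEnd ℂ (f (star y * x)) = f (star x * y)
        rw [← herm (star y * x)]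
        simp [star_mul]
      re_inner_nonneg := fun x => hf.re_nonneg (star_mul_self_nonneg x)
      add_left := fun x y z => by
        show f (star (x + y) * z) = f (star x * z) + f (star y * z)
        rw [star_add, add_mul, map_add]
      smul_left := fun x y r => by
        show f (star (r • x) * y) = starRingEnd ℂ r * f (star x * y)
        rw [star_smul, smul_mul_assoc, map_smul, smul_eq_mul, RCLike.star_def] }
  letI : Inner ℂ A := core.toInner
  have key : ∀ y : A, ‖f y‖ ≤ (f 1).re * ‖y‖ := by
    intro y
    have cs := InnerProductSpace.Core.inner_mul_inner_self_le (𝕜 := ℂ) (F := A) 1 y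
    have e1 : (inner ℂ (1:A) y : ℂ) = f y := by
      show f (star (1:A) * y) = f y
      rw [star_one, one_mul]
    have e2 : (inner ℂ y (1:A) : ℂ) = starRingEnd ℂ (f y) := by
      show f (star y * 1) = starRingEnd ℂ (f y)
      rw [mul_one, herm]
    have e3 : (inner ℂ (1:A) (1:A) : ℂ) = f 1 := by
      show f (star (1:A) * 1) = f 1
      rw [star_one, one_mul]
    have e4 : (inner ℂ y y : ℂ) = f (star y * y) := rfl
    rw [e1, e2, e3, e4] at cs
    have hb : (f (star y * y)).re ≤ ‖y‖ ^ 2 * (f 1).re := by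
      have hle : star y * y ≤ algebraMap ℝ A (‖star y * y‖) :=
        IsSelfAdjoint.le_algebraMap_norm_self (IsSelfAdjoint.star_mul_self y)
      have := hf.re_mono hle
      rw [Algebra.algebraMap_eq_smul_one, ContinuousLinearMap.map_smul_of_tower,
        Complex.real_smul, Complex.re_ofReal_mul, CStarRing.norm_star_mul_self, ← sq] at this
      exact this
    have hnn : 0 ≤ (f 1).re := hf.re_nonneg hone
    have h5 : ‖f y‖ ^ 2 ≤ ((f 1).re * ‖y‖) ^ 2 := by
      have hcj : ‖f y‖ * ‖starRingEnd ℂ (f y)‖ = ‖f y‖ ^ 2 := by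
        rw [RCLike.norm_conj, sq]
      rw [hcj] at cs
      calc ‖f y‖ ^ 2 ≤ (f 1).re * (f (star y * y)).re := by simpa using cs
        _ ≤ (f 1).re * (‖y‖ ^ 2 * (f 1).re) := mul_le_mul_of_nonneg_left hb hnn
        _ = ((f 1).re * ‖y‖) ^ 2 := by ring
    calc ‖f y‖ = Real.sqrt (‖f y‖ ^ 2) := (Real.sqrt_sq (norm_nonneg _)).symm
      _ ≤ Real.sqrt (((f 1).re * ‖y‖) ^ 2) := Real.sqrt_le_sqrt h5
      _ = (f 1).re * ‖y‖ := Real.sqrt_sq (by positivity)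
  exact f.opNorm_le_bound (hf.re_nonneg hone) key

end IsPosFunctional

section Sublinear

variable (f : A →L[ℂ] ℂ)

/-- The decomposition set used to define the sublinear majorant for the Jordan-type
decomposition. -/
def pSet (x : A) : Set ℝ :=
  {r | ∃ u v w : A, u ≤ 0 ∧ v ≤ 0 ∧ x = u + v + w ∧ r = (f u).re + ‖f‖ * ‖w‖}

/-- The sublinear functional `p`. -/
noncomputable def pFun (x : A) : ℝ := sInf (pSet f x)

variable {f}

lemma pSet_nonempty (x : A) : (pSet f x).Nonempty :=
  ⟨‖f‖ * ‖x‖, 0, 0, x, le_refl 0, le_refl 0, by simp, by simp⟩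

lemma pSet_lb (x : A) : ∀ r ∈ pSet f x, -(‖f‖ * ‖x‖) ≤ r := by
  rintro r ⟨u, v, w, hu, hv, hxe, rfl⟩
  have h1 : |(f u).re| ≤ ‖f‖ * ‖u‖ :=
    le_trans (Complex.abs_re_le_norm _) (f.le_opNorm u)
  have h2 : ‖u‖ ≤ ‖x‖ + ‖w‖ := by
    have : ‖u‖ ≤ ‖u + v‖ := auxNormMono hu hv
    have h3 : u + v = x - w := by rw [hxe]; abel
    rw [h3] at this
    exact this.trans (norm_sub_le x w)
  have hf0 : 0 ≤ ‖f‖ := norm_nonneg f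
  nlinarith [abs_le.mp h1, norm_nonneg w, norm_nonneg u]

lemma pSet_bddBelow (x : A) : BddBelow (pSet f x) := ⟨-(‖f‖ * ‖x‖), pSet_lb x⟩

lemma pFun_lb (x : A) : -(‖f‖ * ‖x‖) ≤ pFun f x := le_csInf (pSet_nonempty x) (pSet_lb x)

lemma pFun_ub (x : A) : pFun f x ≤ ‖f‖ * ‖x‖ :=
  csInf_le (pSet_bddBelow x) ⟨0, 0, x, le_refl 0, le_refl 0, by simp, by simp⟩

lemma pFun_nonpos {x : A} (hx : x ≤ 0) : pFun f x ≤ 0 :=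
  csInf_le (pSet_bddBelow x) ⟨0, x, 0, le_refl 0, hx, by simp, by simp⟩

lemma pFun_le_re {x : A} (hx : x ≤ 0) : pFun f x ≤ (f x).re :=
  csInf_le (pSet_bddBelow x) ⟨x, 0, 0, hx, le_refl 0, by simp, by simp⟩

lemma pFun_zero_nonneg : (0:ℝ) ≤ pFun f (0 : A) := by simpa using pFun_lb (f := f) (0 : A)

lemma pFun_add (x y : A) : pFun f (x + y) ≤ pFun f x + pFun f y := by
  have key : ∀ r ∈ pSet f x, ∀ r' ∈ pSet f y, pFun f (x + y) ≤ r + r' := by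
    rintro r ⟨u, v, w, hu, hv, hxe, rfl⟩ r' ⟨u', v', w', hu', hv', hye, rfl⟩
    have hmem : (f (u + u')).re + ‖f‖ * ‖w + w'‖ ∈ pSet f (x + y) :=
      ⟨u + u', v + v', w + w', add_nonpos hu hu', add_nonpos hv hv',
        by rw [hxe, hye]; abel, rfl⟩
    refine (csInf_le (pSet_bddBelow _) hmem).trans ?_
    have h1 : ‖f‖ * ‖w + w'‖ ≤ ‖f‖ * (‖w‖ + ‖w'‖) :=
      mul_le_mul_of_nonneg_left (norm_add_le w w') (norm_nonneg f)
    rw [map_add, Complex.add_re]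
    linarith
  have step : ∀ r ∈ pSet f x, pFun f (x + y) - r ≤ pFun f y := by
    intro r hr
    refine le_csInf (pSet_nonempty y) fun r' hr' => ?_
    linarith [key r hr r' hr']
  have h3 : pFun f (x + y) - pFun f y ≤ pFun f x :=
    le_csInf (pSet_nonempty x) fun r hr => by linarith [step r hr]
  linarith

lemma pFun_smul {c : ℝ} (hc : 0 < c) (x : A) : pFun f (c • x) = c * pFun f x := by
  have aux : ∀ {c : ℝ}, 0 < c → ∀ x : A, pFun f (c • x) ≤ c * pFun f x := by
    intro c hc x
    have key : ∀ r ∈ pSet f x, pFun f (c • x) ≤ c * r := by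
      rintro r ⟨u, v, w, hu, hv, hxe, rfl⟩
      have hmem : c * ((f u).re + ‖f‖ * ‖w‖) ∈ pSet f (c • x) := by
        refine ⟨c • u, c • v, c • w, smul_nonpos_of_nonneg_of_nonpos hc.le hu,
          smul_nonpos_of_nonneg_of_nonpos hc.le hv, by rw [hxe, smul_add, smul_add], ?_⟩
        rw [ContinuousLinearMap.map_smul_of_tower, Complex.real_smul, Complex.re_ofReal_mul,
          norm_smul, Real.norm_eq_abs, abs_of_pos hc]
        ring
      exact csInf_le (pSet_bddBelow _) hmem
    have h2 : pFun f (c • x) / c ≤ pFun f x :=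
      le_csInf (pSet_nonempty x) fun r hr => by
        rw [div_le_iff₀ hc]
        calc pFun f (c • x) ≤ c * r := key r hr
          _ = r * c := mul_comm _ _
    calc pFun f (c • x) = (pFun f (c • x) / c) * c := by field_simp
      _ ≤ pFun f x * c := mul_le_mul_of_nonneg_right h2 hc.le
      _ = c * pFun f x := mul_comm _ _
  refine le_antisymm (aux hc x) ?_
  have h2 := aux (inv_pos.mpr hc) (c • x)
  rw [inv_smul_smul₀ hc.ne' x] at h2
  calc c * pFun f x ≤ c * (c⁻¹ * pFun f (c • x)) := mul_le_mul_of_nonneg_left h2 hc.le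
    _ = pFun f (c • x) := by field_simp

end Sublinear

/-- If `a` is positive and invertible, then for every `α > 0` and hermitian `f`,
`r_{a^α}(f) ≤ ‖a^α‖ * ‖f‖` and `‖f‖ ≤ ‖a^{-α}‖ * r_{a^α}(f)`. -/
theorem rSeminorm_rpow_equiv_norm_of_isUnit (a : A) (ha : 0 ≤ a) (ha' : IsUnit a)
    (α : ℝ) (hα : 0 < α) (f : A →L[ℂ] ℂ) (hf : IsHermitianFunctional f) :
    rSeminorm (a ^ α) f ≤ ‖a ^ α‖ * ‖f‖ ∧ ‖f‖ ≤ ‖a ^ (-α)‖ * rSeminorm (a ^ α) f := by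
  set b : A := a ^ α with hbdef
  set c : A := a ^ (-α) with hcdef
  set S : Set ℝ := { r : ℝ | ∃ f₁ f₂ : A →L[ℂ] ℂ, IsPosFunctional f₁ ∧ IsPosFunctional f₂ ∧
    f = f₁ - f₂ ∧ (r : ℂ) = f₁ b + f₂ b } with hSdef
  have hrS : rSeminorm b f = sInf S := rfl
  have hb0 : (0:A) ≤ b := CFC.rpow_nonneg
  have hbs : IsSelfAdjoint b := .of_nonneg hb0
  have Snn : ∀ r ∈ S, (0:ℝ) ≤ r := by
    rintro r ⟨f₁, f₂, h₁, h₂, hfe, hre⟩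
    have e : r = (f₁ b).re + (f₂ b).re := by
      have := congrArg Complex.re hre
      simpa using this
    rw [e]
    exact add_nonneg (h₁.re_nonneg hb0) (h₂.re_nonneg hb0)
  have SbddBelow : BddBelow S := ⟨0, Snn⟩
  obtain hTriv | hNon := subsingleton_or_nontrivial A
  · have hf0 : f = 0 := ContinuousLinearMap.ext fun x => by
      rw [Subsingleton.elim x (0:A), map_zero]
      rfl
    have hp0 : IsPosFunctional (0 : A →L[ℂ] ℂ) := fun x _ => by simp
    have h0S : (0:ℝ) ∈ S := ⟨0, 0, hp0, hp0, by rw [hf0, sub_zero], by simp⟩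
    have hinf : sInf S = 0 :=
      le_antisymm (csInf_le SbddBelow h0S) (le_csInf ⟨0, h0S⟩ Snn)
    rw [hrS, hinf, hf0]
    simp
  have hsp : (0:ℝ≥0) ∉ spectrum ℝ≥0 a := spectrum.zero_notMem ℝ≥0 ha'
  have hmul : b * c = 1 := CFC.rpow_mul_rpow_neg α (ha'.isStrictlyPositive ha)
  have hbne : b ≠ 0 := by
    intro h
    rw [h, zero_mul] at hmul
    exact zero_ne_one hmul
  have hcne : c ≠ 0 := by
    intro h
    rw [h, mul_zero] at hmul
    exact zero_ne_one hmul
  have key1 : (1:A) ≤ ‖c‖ • b := by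
    set s : A := a ^ (α/2) with hsdef
    have hs0 : (0:A) ≤ s := CFC.rpow_nonneg
    have hss : IsSelfAdjoint s := .of_nonneg hs0
    have h1 : s * c * s = 1 := by
      rw [hsdef, hcdef, ← CFC.rpow_add ha', ← CFC.rpow_add ha',
        show α/2 + -α + α/2 = (0:ℝ) by ring, CFC.rpow_zero a ha]
    have h2 : c ≤ algebraMap ℝ A ‖c‖ :=
      IsSelfAdjoint.le_algebraMap_norm_self (.of_nonneg CFC.rpow_nonneg)
    have h3 := star_left_conjugate_le_conjugate h2 s
    rw [hss.star_eq, h1] at h3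
    refine h3.trans_eq ?_
    have e3 : s * s = b := by
      rw [hbdef, hsdef, ← CFC.rpow_add ha']
      norm_num
    rw [Algebra.algebraMap_eq_smul_one, mul_smul_comm, mul_one, smul_mul_assoc, e3]
  have Slb : ∀ r ∈ S, ‖f‖ ≤ ‖c‖ * r := by
    rintro r ⟨f₁, f₂, h₁, h₂, hfe, hre⟩
    have e : r = (f₁ b).re + (f₂ b).re := by
      have := congrArg Complex.re hre
      simpa using this
    have n1 : ‖f‖ ≤ ‖f₁‖ + ‖f₂‖ := by rw [hfe]; exact norm_sub_le f₁ f₂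
    have key2 : ∀ g : A →L[ℂ] ℂ, IsPosFunctional g → (g 1).re ≤ ‖c‖ * (g b).re := by
      intro g hg
      have := hg.re_mono key1
      rwa [ContinuousLinearMap.map_smul_of_tower, Complex.real_smul,
        Complex.re_ofReal_mul] at this
    have k1 := key2 f₁ h₁
    have k2 := key2 f₂ h₂
    have m1 := h₁.norm_le_re_one
    have m2 := h₂.norm_le_re_one
    rw [e, mul_add]
    linarith
  have hfb : ∀ x : A, |(f x).re| ≤ ‖f‖ * ‖x‖ := fun x =>
    le_trans (Complex.abs_re_le_norm _) (f.le_opNorm x)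
  set pb : ℝ := pFun f (-b) with hpb
  have hdomH : ∀ t : ℝ, t • b = 0 → t • (-pb) = 0 := by
    intro t ht
    rcases smul_eq_zero.mp ht with h | h
    · rw [h, zero_smul]
    · exact absurd h hbne
  set dom := LinearPMap.mkSpanSingleton' (R := ℝ) (σ := RingHom.id ℝ) b (-pb) hdomH with hdomdef
  have hdomle : ∀ x : dom.domain, dom x ≤ pFun f x := by
    rintro ⟨x, hx⟩
    obtain ⟨t, rfl⟩ := Submodule.mem_span_singleton.mp hx
    rw [LinearPMap.mkSpanSingleton'_apply]
    show t • -pb ≤ pFun f (t • b)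
    rcases lt_trichotomy t 0 with h | h | h
    · have e1 : t • b = (-t) • (-b) := by rw [neg_smul_neg]
      rw [e1, pFun_smul (neg_pos.mpr h), smul_eq_mul]
      exact le_of_eq (by ring)
    · rw [h, zero_smul, zero_smul]
      exact pFun_zero_nonneg
    · rw [pFun_smul h, smul_eq_mul]
      have h4 : -pb ≤ pFun f b := by
        have h5 := pFun_add (f := f) b (-b)
        have h6 := pFun_zero_nonneg (f := f)
        rw [add_neg_cancel] at h5
        rw [hpb]
        linarith
      exact mul_le_mul_of_nonneg_left h4 h.le
  obtain ⟨g, hg_ext, hg_le⟩ :=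
    exists_extension_of_le_sublinear dom (pFun f)
      (fun c hc x => pFun_smul hc x) (fun x y => pFun_add x y) hdomle
  have hgb : g b = -pb := by
    have hmem : b ∈ dom.domain := by
      rw [hdomdef, LinearPMap.domain_mkSpanSingleton]
      exact Submodule.mem_span_singleton_self b
    have e : dom ⟨b, hmem⟩ = -pb := LinearPMap.mkSpanSingleton'_apply_self _ _ _ _
    exact (hg_ext ⟨b, hmem⟩).trans e
  have hg_np : ∀ x : A, x ≤ 0 → g x ≤ 0 := fun x hx => (hg_le x).trans (pFun_nonpos hx)
  have hg_fre : ∀ x : A, x ≤ 0 → g x ≤ (f x).re := fun x hx =>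
    (hg_le x).trans (pFun_le_re hx)
  have hg_pos : ∀ x : A, 0 ≤ x → 0 ≤ g x := by
    intro x hx
    have := hg_np (-x) (neg_nonpos.mpr hx)
    rw [map_neg] at this
    linarith
  have hg_gef : ∀ x : A, 0 ≤ x → (f x).re ≤ g x := by
    intro x hx
    have := hg_fre (-x) (neg_nonpos.mpr hx)
    rw [map_neg, map_neg, Complex.neg_re] at this
    linarith
  have hg_bd : ∀ x : A, |g x| ≤ ‖f‖ * ‖x‖ := by
    intro x
    rw [abs_le]
    constructor
    · have := (hg_le (-x)).trans (pFun_ub (-x))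
      rw [map_neg, norm_neg] at this
      linarith
    · exact (hg_le x).trans (pFun_ub x)
  set g2 : A →ₗ[ℝ] ℝ :=
    { toFun := fun x => (g x + g (star x)) / 2
      map_add' := fun x y => by
        show (g (x + y) + g (star (x + y))) / 2 =
          (g x + g (star x)) / 2 + (g y + g (star y)) / 2
        rw [star_add, map_add, map_add]
        ring
      map_smul' := fun r x => by
        show (g (r • x) + g (star (r • x))) / 2 = r • ((g x + g (star x)) / 2)
        rw [star_smul, star_trivial, map_smul, map_smul, smul_eq_mul, smul_eq_mul,
          smul_eq_mul]
        ring } with hg2def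
  have hg2_bd : ∀ x : A, ‖g2 x‖ ≤ ‖f‖ * ‖x‖ := by
    intro x
    show ‖(g x + g (star x)) / 2‖ ≤ ‖f‖ * ‖x‖
    rw [Real.norm_eq_abs]
    have h1 := hg_bd x
    have h2 := hg_bd (star x)
    rw [norm_star] at h2
    have h3 := abs_add_le (g x) (g (star x))
    rw [abs_div, abs_two]
    rw [abs_le] at h1 h2
    rw [div_le_iff₀ (by norm_num : (0:ℝ) < 2)]
    have h4 := abs_le.mpr ⟨h1.1, h1.2⟩
    calc |g x + g (star x)| ≤ |g x| + |g (star x)| := h3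
      _ ≤ ‖f‖ * ‖x‖ + ‖f‖ * ‖x‖ := add_le_add (abs_le.mpr h1) (abs_le.mpr h2)
      _ = ‖f‖ * ‖x‖ * 2 := by ring
  set G : A →L[ℝ] ℝ := LinearMap.mkContinuous g2 ‖f‖ hg2_bd with hGdef
  have hG_apply : ∀ x : A, G x = (g x + g (star x)) / 2 := fun x => rfl
  have hG_sa : ∀ x : A, IsSelfAdjoint x → G x = g x := by
    intro x hx
    rw [hG_apply, hx.star_eq]
    ring
  have hG_skew : ∀ x : A, IsSelfAdjoint x → G (Complex.I • x) = 0 := by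
    intro x hx
    rw [hG_apply]
    have e : star (Complex.I • x) = -(Complex.I • x) := by
      rw [star_smul, Complex.star_def, Complex.conj_I, hx.star_eq, neg_smul]
    rw [e, map_neg]
    ring
  set f₁ : A →L[ℂ] ℂ := G.extendTo𝕜' with hf₁def
  have hf₁_apply : ∀ x : A, f₁ x = (G x : ℂ) - Complex.I * (G (Complex.I • x) : ℂ) :=
    fun x => rfl
  have hf₁_sa : ∀ x : A, IsSelfAdjoint x → f₁ x = ((g x : ℝ) : ℂ) := by
    intro x hx
    rw [hf₁_apply, hG_skew x hx, hG_sa x hx]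
    simp
  have hpos₁ : IsPosFunctional f₁ := by
    intro x hx
    rw [hf₁_sa x (.of_nonneg hx)]
    exact Complex.zero_le_real.mpr (hg_pos x hx)
  set f₂ : A →L[ℂ] ℂ := f₁ - f with hf₂def
  have hermx : ∀ x : A, IsSelfAdjoint x → f x = ((f x).re : ℂ) := by
    intro x hx
    have h1 := hf x
    rw [hx.star_eq] at h1
    have h2 := congrArg Complex.im h1
    rw [Complex.conj_im] at h2
    rw [Complex.ext_iff]
    exact ⟨by simp, by simp; linarith⟩
  have hpos₂ : IsPosFunctional f₂ := by
    intro x hx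
    have hxs : IsSelfAdjoint x := .of_nonneg hx
    have e : f₂ x = f₁ x - f x := rfl
    rw [e, hf₁_sa x hxs, hermx x hxs, ← Complex.ofReal_sub]
    exact Complex.zero_le_real.mpr (by linarith [hg_gef x hx])
  have hfd : f = f₁ - f₂ := by rw [hf₂def, sub_sub_cancel]
  set r₀ : ℝ := 2 * g b - (f b).re with hr₀def
  have hr₀S : r₀ ∈ S := by
    refine ⟨f₁, f₂, hpos₁, hpos₂, hfd, ?_⟩
    have e1 : f₁ b = ((g b : ℝ) : ℂ) := hf₁_sa b hbs
    have e2 : f₂ b = f₁ b - f b := rfl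
    rw [e2, e1, hermx b hbs, hr₀def]
    push_cast
    ring
  have pkey : -((‖b‖ * ‖f‖ + (f b).re) / 2) ≤ pb := by
    rw [hpb]
    refine le_csInf (pSet_nonempty _) ?_
    rintro r ⟨u, v, w, hu, hv, hee, rfl⟩
    have hu_sa : IsSelfAdjoint u := by
      have h1 : IsSelfAdjoint (-u) := .of_nonneg (neg_nonneg.mpr hu)
      simpa using h1.neg
    have hv_sa : IsSelfAdjoint v := by
      have h1 : IsSelfAdjoint (-v) := .of_nonneg (neg_nonneg.mpr hv)
      simpa using h1.neg
    have hb2 : b = -(u + v + w) := by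
      rw [← hee, neg_neg]
    have hw_sa : IsSelfAdjoint w := by
      have e : w = -b - u - v := by rw [hb2]; abel
      rw [e]
      exact (hbs.neg.sub hu_sa).sub hv_sa
    set M : ℝ := 2 * ‖w‖ + ‖b‖ with hMdef
    have hM : 0 ≤ M := by positivity
    set z : A := u + u + b with hzdef
    have hz_sa : IsSelfAdjoint z := (hu_sa.add hu_sa).add hbs
    have hupper : z ≤ algebraMap ℝ A M := by
      have h1 : z ≤ b := by
        rw [hzdef]
        calc u + u + b ≤ 0 + b := add_le_add_left (add_nonpos hu hu) b
          _ = b := zero_add b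
      refine h1.trans (hbs.le_algebraMap_norm_self.trans ?_)
      have h2 : (0:A) ≤ algebraMap ℝ A M - algebraMap ℝ A ‖b‖ := by
        rw [← map_sub, Algebra.algebraMap_eq_smul_one]
        refine smul_nonneg ?_ IsPosFunctional.one_nonneg'
        rw [hMdef]
        have := norm_nonneg w
        linarith
      exact sub_nonneg.mp h2
    have hlower : -(algebraMap ℝ A M) ≤ z := by
      have hq1 : (0:A) ≤ u + b + algebraMap ℝ A ‖w‖ := by
        have h1 : u + b + w = -v := by rw [hb2]; abel
        have h2 : (0:A) ≤ algebraMap ℝ A ‖w‖ - w :=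
          sub_nonneg.mpr hw_sa.le_algebraMap_norm_self
        have h3 : u + b + algebraMap ℝ A ‖w‖ = -v + (algebraMap ℝ A ‖w‖ - w) := by
          rw [← h1]; abel
        rw [h3]
        exact add_nonneg (neg_nonneg.mpr hv) h2
      have hq2 : (0:A) ≤ algebraMap ℝ A ‖b‖ - b :=
        sub_nonneg.mpr hbs.le_algebraMap_norm_self
      have hsum : (0:A) ≤ z + algebraMap ℝ A M := by
        have e : z + algebraMap ℝ A M =
            (u + b + algebraMap ℝ A ‖w‖) + (u + b + algebraMap ℝ A ‖w‖)
              + (algebraMap ℝ A ‖b‖ - b) := by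
          rw [hzdef, hMdef, show 2 * ‖w‖ + ‖b‖ = ‖w‖ + ‖w‖ + ‖b‖ by ring, map_add, map_add]
          abel
        rw [e]
        exact add_nonneg (add_nonneg hq1 hq1) hq2
      refine sub_nonneg.mp ?_
      rwa [sub_neg_eq_add]
    have hznorm : ‖z‖ ≤ M := auxNormLe hz_sa hM hlower hupper
    have hfz : -(‖f‖ * M) ≤ (f z).re := by
      have h1 := abs_le.mp (hfb z)
      have h2 : ‖f‖ * ‖z‖ ≤ ‖f‖ * M := mul_le_mul_of_nonneg_left hznorm (norm_nonneg f)
      linarith [h1.1]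
    have hz_re : (f z).re = (f u).re + (f u).re + (f b).re := by
      rw [hzdef, map_add, map_add, Complex.add_re, Complex.add_re]
    have hexp : ‖f‖ * M = 2 * (‖f‖ * ‖w‖) + ‖f‖ * ‖b‖ := by rw [hMdef]; ring
    rw [hz_re, hexp] at hfz
    have hcomm : ‖f‖ * ‖b‖ = ‖b‖ * ‖f‖ := mul_comm _ _
    linarith
  have hr₀_le : r₀ ≤ ‖b‖ * ‖f‖ := by
    rw [hr₀def, hgb]
    linarith
  constructor
  · rw [hrS]
    exact (csInf_le SbddBelow hr₀S).trans hr₀_le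
  · have hcpos : 0 < ‖c‖ := norm_pos_iff.mpr hcne
    have h1 : ∀ r ∈ S, ‖f‖ / ‖c‖ ≤ r := fun r hr => by
      rw [div_le_iff₀ hcpos]
      calc ‖f‖ ≤ ‖c‖ * r := Slb r hr
        _ = r * ‖c‖ := mul_comm _ _
    have h2 : ‖f‖ / ‖c‖ ≤ sInf S := le_csInf ⟨r₀, hr₀S⟩ h1
    rw [div_le_iff₀ hcpos] at h2
    rw [hrS]
    calc ‖f‖ ≤ sInf S * ‖c‖ := h2
      _ = ‖c‖ * sInf S := mul_comm _ _
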